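/- The Klein bottle group ⟨a, b : b·a·b⁻¹ = a⁻¹⟩ is residually nilpotent: the intersection ⋂_{n≥1} Γ_n of its lower central series is trivial. -/

import Mathlib

/-- The single relation `b·a·b⁻¹·a = 1`, i.e. `b·a·b⁻¹ = a⁻¹`, of the Klein bottle group,
where `a = FreeGroup.of 0` and `b = FreeGroup.of 1`. -/
def kleinRels : Set (FreeGroup (Fin 2)) :=
  {FreeGroup.of 1 * FreeGroup.of 0 * (FreeGroup.of 1)⁻¹ * FreeGroup.of 0}

/-- The Klein bottle group `π₁(𝕂) = ⟨a, b : b·a·b⁻¹ = a⁻¹⟩`. -/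
abbrev KleinBottleGroup := PresentedGroup kleinRels

namespace KleinAux

/-- The sign `(-1)^n` for an integer `n`. -/
def w (n : ℤ) : ℤ := (((-1 : ℤˣ) ^ n : ℤˣ) : ℤ)

lemma w_add (m n : ℤ) : w (m + n) = w m * w n := by
  simp [w, zpow_add]

@[simp] lemma w_zero : w 0 = 1 := by simp [w]

@[simp] lemma w_one : w 1 = -1 := by simp [w]

lemma w_cases (n : ℤ) : w n = 1 ∨ w n = -1 := by
  rcases Int.units_eq_one_or ((-1 : ℤˣ) ^ n) with h | h <;> simp [w, h]

@[simp] lemma w_neg (n : ℤ) : w (-n) = w n := by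
  rcases Int.units_eq_one_or ((-1 : ℤˣ) ^ n) with h | h <;>
    simp [w, zpow_neg, h]

lemma two_dvd_one_sub_w (n : ℤ) : (2 : ℤ) ∣ 1 - w n := by
  rcases w_cases n with h | h <;> simp [h]

lemma two_dvd_w_sub_one (n : ℤ) : (2 : ℤ) ∣ w n - 1 := by
  rcases w_cases n with h | h <;> simp [h]

/-- The semidirect product `ℤ ⋊ ℤ`, with the second factor acting by inversion. -/
@[ext] structure K2 where
  m : ℤ
  n : ℤ

namespace K2

instance : Mul K2 := ⟨fun x y => ⟨x.m + w x.n * y.m, x.n + y.n⟩⟩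
instance : One K2 := ⟨⟨0, 0⟩⟩
instance : Inv K2 := ⟨fun x => ⟨-(w x.n * x.m), -x.n⟩⟩

@[simp] lemma mul_m (x y : K2) : (x * y).m = x.m + w x.n * y.m := rfl
@[simp] lemma mul_n (x y : K2) : (x * y).n = x.n + y.n := rfl
@[simp] lemma one_m : (1 : K2).m = 0 := rfl
@[simp] lemma one_n : (1 : K2).n = 0 := rfl
@[simp] lemma inv_m (x : K2) : x⁻¹.m = -(w x.n * x.m) := rfl
@[simp] lemma inv_n (x : K2) : x⁻¹.n = -x.n := rfl

instance : Group K2 where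
  mul_assoc x y z := by
    ext <;> simp [w_add] <;> ring
  one_mul x := by ext <;> simp
  mul_one x := by ext <;> simp
  inv_mul_cancel x := by
    ext <;> simp [w_add]

open scoped commutatorElement in
lemma comm_m (x y : K2) :
    ⁅x, y⁆.m = x.m * (1 - w y.n) + y.m * (w x.n - 1) := by
  simp only [commutatorElement_def, mul_m, mul_n, inv_m, inv_n, w_add, w_neg]
  rcases w_cases x.n with hx | hx <;> rcases w_cases y.n with hy | hy <;>
    rw [hx, hy] <;> ring

open scoped commutatorElement in
lemma comm_n (x y : K2) : ⁅x, y⁆.n = 0 := by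
  simp [commutatorElement_def]

end K2

/-- The subgroup of `K2` consisting of `(m, 0)` with `2^k ∣ m`. -/
def H (k : ℕ) : Subgroup K2 where
  carrier := {x | x.n = 0 ∧ (2 ^ k : ℤ) ∣ x.m}
  one_mem' := ⟨rfl, dvd_zero _⟩
  mul_mem' := by
    rintro x y ⟨hx0, hxd⟩ ⟨hy0, hyd⟩
    refine ⟨by simp [hx0, hy0], ?_⟩
    simp only [K2.mul_m, hx0, w_zero, one_mul]
    exact dvd_add hxd hyd
  inv_mem' := by
    rintro x ⟨hx0, hxd⟩
    exact ⟨by simp [hx0], by simpa [hx0] using hxd⟩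

lemma mem_H {k : ℕ} {x : K2} : x ∈ H k ↔ x.n = 0 ∧ (2 ^ k : ℤ) ∣ x.m := Iff.rfl

lemma lcs_le_H (k : ℕ) : (⊤ : Subgroup K2).lowerCentralSeries (k + 1) ≤ H k := by
  induction k with
  | zero =>
    have h : (⊤ : Subgroup K2).lowerCentralSeries 1 = ⁅(⊤ : Subgroup K2), ⊤⁆ := rfl
    rw [h, Subgroup.commutator_le]
    intro x _ y _
    exact ⟨K2.comm_n x y, by simp⟩
  | succ k ih =>
    have h : (⊤ : Subgroup K2).lowerCentralSeries (k + 2) = ⁅(⊤ : Subgroup K2).lowerCentralSeries (k + 1), ⊤⁆ := rfl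
    rw [h, Subgroup.commutator_le]
    intro x hx y _
    obtain ⟨hx0, hxd⟩ := ih hx
    refine ⟨K2.comm_n x y, ?_⟩
    rw [K2.comm_m, hx0, w_zero]
    have : (2 ^ (k + 1) : ℤ) ∣ x.m * (1 - w y.n) := by
      rw [pow_succ]
      exact mul_dvd_mul hxd (two_dvd_one_sub_w y.n)
    simpa using this

/-- The images of the generators in `K2`. -/
def gen : Fin 2 → K2 := ![⟨1, 0⟩, ⟨0, 1⟩]

lemma gen_rel : ∀ r ∈ kleinRels, FreeGroup.lift gen r = 1 := by
  rintro r hr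
  rw [kleinRels, Set.mem_singleton_iff] at hr
  subst hr
  simp only [map_mul, map_inv, FreeGroup.lift_apply_of]
  ext <;> simp [gen]

/-- The canonical homomorphism from the Klein bottle group to `K2`. -/
def φ : KleinBottleGroup →* K2 := PresentedGroup.toGroup gen_rel

noncomputable local instance : DecidableEq KleinBottleGroup := Classical.decEq _

/-- Generators of the Klein bottle group. -/
def a : KleinBottleGroup := PresentedGroup.of 0
def b : KleinBottleGroup := PresentedGroup.of 1

lemma rel : b * a * b⁻¹ * a = 1 := by
  have h : (QuotientGroup.mk (FreeGroup.of 1 * FreeGroup.of 0 * (FreeGroup.of 1)⁻¹ *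
      FreeGroup.of 0) : KleinBottleGroup) = 1 := by
    rw [QuotientGroup.eq_one_iff]
    exact Subgroup.subset_normalClosure (by simp [kleinRels])
  exact h

lemma conj_a (m : ℤ) : b * a ^ m * b⁻¹ = a ^ (-m) := by
  have h1 : b * a * b⁻¹ = a⁻¹ := by
    rw [eq_inv_iff_mul_eq_one]
    exact rel
  calc b * a ^ m * b⁻¹ = (b * a * b⁻¹) ^ m := by rw [conj_zpow]
  _ = (a⁻¹) ^ m := by rw [h1]
  _ = a ^ (-m) := by group

lemma conj_a' (m : ℤ) : b⁻¹ * a ^ m * b = a ^ (-m) := by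
  have h := conj_a (-m)
  rw [neg_neg] at h
  rw [← h]
  group

lemma b_zpow_mul_a_zpow (n : ℤ) : ∀ m : ℤ, b ^ n * a ^ m = a ^ (w n * m) * b ^ n := by
  induction n using Int.induction_on with
  | zero => intro m; simp
  | succ k ih =>
    intro m
    have hb : b ^ ((k : ℤ) + 1) = b ^ (k : ℤ) * b := by rw [zpow_add_one]
    have hw : w ((k : ℤ) + 1) * m = w (k : ℤ) * (-m) := by
      rw [w_add, w_one]; ring
    calc b ^ ((k : ℤ) + 1) * a ^ m
        = b ^ (k : ℤ) * (b * a ^ m * b⁻¹) * b := by rw [hb]; group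
      _ = b ^ (k : ℤ) * a ^ (-m) * b := by rw [conj_a]
      _ = a ^ (w (k : ℤ) * (-m)) * b ^ (k : ℤ) * b := by rw [ih (-m)]
      _ = a ^ (w ((k : ℤ) + 1) * m) * b ^ ((k : ℤ) + 1) := by rw [hw, hb, mul_assoc]
  | pred k ih =>
    intro m
    have hb : b ^ (-(k : ℤ) - 1) = b ^ (-(k : ℤ)) * b⁻¹ := by
      rw [← zpow_neg_one, ← zpow_add]; ring_nf
    have hw : w (-(k : ℤ) - 1) * m = w (-(k : ℤ)) * (-m) := by
      have : (-(k : ℤ) - 1) = -(k : ℤ) + (-1) := by ring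
      rw [this, w_add]
      have : w (-1 : ℤ) = -1 := by rw [← w_neg]; simp
      rw [this]; ring
    calc b ^ (-(k : ℤ) - 1) * a ^ m
        = b ^ (-(k : ℤ)) * (b⁻¹ * a ^ m * b) * b⁻¹ := by rw [hb]; group
      _ = b ^ (-(k : ℤ)) * a ^ (-m) * b⁻¹ := by rw [conj_a']
      _ = a ^ (w (-(k : ℤ)) * (-m)) * b ^ (-(k : ℤ)) * b⁻¹ := by rw [ih (-m)]
      _ = a ^ (w (-(k : ℤ) - 1) * m) * b ^ (-(k : ℤ) - 1) := by rw [hw, hb, mul_assoc]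

/-- The inverse homomorphism `K2 → KleinBottleGroup`. -/
def ψ : K2 →* KleinBottleGroup where
  toFun x := a ^ x.m * b ^ x.n
  map_one' := by simp
  map_mul' x y := by
    show a ^ (x.m + w x.n * y.m) * b ^ (x.n + y.n) =
      (a ^ x.m * b ^ x.n) * (a ^ y.m * b ^ y.n)
    rw [zpow_add, zpow_add]
    calc a ^ x.m * a ^ (w x.n * y.m) * (b ^ x.n * b ^ y.n)
        = a ^ x.m * (a ^ (w x.n * y.m) * b ^ x.n) * b ^ y.n := by group
      _ = a ^ x.m * (b ^ x.n * a ^ y.m) * b ^ y.n := by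
          rw [b_zpow_mul_a_zpow x.n y.m]
      _ = a ^ x.m * b ^ x.n * (a ^ y.m * b ^ y.n) := by group

lemma psi_phi (g : KleinBottleGroup) : ψ (φ g) = g := by
  have h : ψ.comp φ = MonoidHom.id _ := by
    apply PresentedGroup.ext
    intro x
    fin_cases x <;>
      simp [φ, ψ, PresentedGroup.toGroup.of, gen, a, b, MonoidHom.comp_apply]
  calc ψ (φ g) = (ψ.comp φ) g := rfl
  _ = g := by rw [h]; rfl

end KleinAux

open KleinAux in
/-- The Klein bottle group is residually nilpotent: the intersection of its lower
central series is trivial. -/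
theorem kleinBottleGroup_residually_nilpotent :
    (⨅ n, (⊤ : Subgroup KleinBottleGroup).lowerCentralSeries n) = ⊥ := by
  rw [eq_bot_iff]
  intro g hg
  rw [Subgroup.mem_iInf] at hg
  have hφ : ∀ k : ℕ, φ g ∈ H k := by
    intro k
    exact lcs_le_H k (lowerCentralSeries.map φ (k + 1) ⟨g, hg (k + 1), rfl⟩)
  have hn : (φ g).n = 0 := (hφ 0).1
  have hm : (φ g).m = 0 := by
    by_contra hne
    have hd : (2 : ℤ) ^ (φ g).m.natAbs ∣ |(φ g).m| := (dvd_abs _ _).mpr (hφ _).2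
    have hle : (2 : ℤ) ^ (φ g).m.natAbs ≤ |(φ g).m| := Int.le_of_dvd (abs_pos.mpr hne) hd
    have hlt : |(φ g).m| < 2 ^ (φ g).m.natAbs := by
      have h2 := Nat.lt_two_pow_self (n := (φ g).m.natAbs)
      calc |(φ g).m| = ((φ g).m.natAbs : ℤ) := Int.abs_eq_natAbs _
        _ < (2 : ℤ) ^ (φ g).m.natAbs := by exact_mod_cast h2
    omega
  have h1 : φ g = 1 := K2.ext hm hn
  have hg1 : g = 1 := by rw [← psi_phi g, h1, map_one]
  exact (Subgroup.mem_bot).mpr hg1
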